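/- Define w : ℝ³ → ℝ by w(μ₁, μ₂, μ₃) = log(e^{μ₁} + e^{μ₂} + e^{μ₃} + e^{(μ₁+μ₂)/2}). Then w is a differentiable choice welfare function (monotone, translation invariant, convex, differentiable), and its mixed partial derivative satisfies ∂²w/∂μ₁∂μ₂ = e^{(μ₁+μ₂)/2}(−e^{μ₁} − e^{μ₂} + e^{μ₃} − 4e^{(μ₁+μ₂)/2}) / (4(e^{μ₁} + e^{μ₂} + e^{μ₃} + e^{(μ₁+μ₂)/2})²); in particular, ∂²w/∂μ₁∂μ₂ ≥ 0 if and only if e^{μ₃} ≥ 4e^{(μ₁+μ₂)/2} + e^{μ₁} + e^{μ₂}, so w is not submodular and the choice model q(μ) = ∇w(μ) is not substitutable. -/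

import Mathlib

open scoped BigOperators
open MeasureTheory

noncomputable section

/-- The simplex Δ_{n-1} in ℝⁿ. -/
def choiceSimplex (n : ℕ) : Set (Fin n → ℝ) :=
  {x | (∀ i, 0 ≤ x i) ∧ ∑ i, x i = 1}

/-- A choice welfare function: monotone, translation invariant, convex. -/
def IsCWF {n : ℕ} (w : (Fin n → ℝ) → ℝ) : Prop :=
  (∀ μ₁ μ₂ : Fin n → ℝ, μ₂ ≤ μ₁ → w μ₂ ≤ w μ₁) ∧
  (∀ (μ : Fin n → ℝ) (t : ℝ), w (μ + fun _ => t) = w μ + t) ∧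
  ConvexOn ℝ Set.univ w

/-- The gradient of w at μ, whose i-th component is the partial derivative ∂w/∂μᵢ. -/
def grad {n : ℕ} (w : (Fin n → ℝ) → ℝ) (μ : Fin n → ℝ) : Fin n → ℝ :=
  fun i => fderiv ℝ w μ (Pi.single i 1)

namespace Stmt19Aux

open Real ContinuousLinearMap

abbrev P (i : Fin 3) : (Fin 3 → ℝ) →L[ℝ] ℝ := ContinuousLinearMap.proj i

def Mm : (Fin 3 → ℝ) →L[ℝ] ℝ := (2:ℝ)⁻¹ • (P 0 + P 1)

def Sf (μ : Fin 3 → ℝ) : ℝ :=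
  Real.exp (μ 0) + Real.exp (μ 1) + Real.exp (μ 2) + Real.exp ((μ 0 + μ 1) / 2)

lemma Sf_pos (μ : Fin 3 → ℝ) : 0 < Sf μ := by unfold Sf; positivity

def Dmap (μ : Fin 3 → ℝ) : (Fin 3 → ℝ) →L[ℝ] ℝ :=
  Real.exp (μ 0) • P 0 + Real.exp (μ 1) • P 1 + Real.exp (μ 2) • P 2 +
    Real.exp ((μ 0 + μ 1) / 2) • Mm

lemma hasFDerivAt_m (μ : Fin 3 → ℝ) :
    HasFDerivAt (fun ν : Fin 3 → ℝ => (ν 0 + ν 1) / 2) Mm μ := by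
  have h := ((hasFDerivAt_apply (𝕜 := ℝ) (0 : Fin 3) μ).add
      (hasFDerivAt_apply (𝕜 := ℝ) (1 : Fin 3) μ)).mul_const (2:ℝ)⁻¹
  simpa [div_eq_mul_inv, Mm] using h

lemma hasFDerivAt_S (μ : Fin 3 → ℝ) : HasFDerivAt Sf (Dmap μ) μ := by
  have h0 := (hasFDerivAt_apply (𝕜 := ℝ) (0 : Fin 3) μ).exp
  have h1 := (hasFDerivAt_apply (𝕜 := ℝ) (1 : Fin 3) μ).exp
  have h2 := (hasFDerivAt_apply (𝕜 := ℝ) (2 : Fin 3) μ).exp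
  have hm := (hasFDerivAt_m μ).exp
  exact (((h0.add h1).add h2).add hm : _)

def wfun : (Fin 3 → ℝ) → ℝ := fun μ =>
  Real.log (Real.exp (μ 0) + Real.exp (μ 1) + Real.exp (μ 2) + Real.exp ((μ 0 + μ 1) / 2))

lemma wfun_eq (μ : Fin 3 → ℝ) : wfun μ = Real.log (Sf μ) := rfl

lemma hasFDerivAt_w (μ : Fin 3 → ℝ) :
    HasFDerivAt wfun ((Sf μ)⁻¹ • Dmap μ) μ :=
  (hasFDerivAt_S μ).log (Sf_pos μ).ne'

def Nf (μ : Fin 3 → ℝ) : ℝ := Real.exp (μ 0) + Real.exp ((μ 0 + μ 1) / 2) * 2⁻¹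
def g0 (μ : Fin 3 → ℝ) : ℝ := Nf μ * (Sf μ)⁻¹

lemma grad0 (μ : Fin 3 → ℝ) : fderiv ℝ wfun μ (Pi.single (0 : Fin 3) 1) = g0 μ := by
  rw [(hasFDerivAt_w μ).fderiv]
  simp [Dmap, Mm, Pi.single_apply, g0, Nf]
  ring

lemma grad1 (μ : Fin 3 → ℝ) : fderiv ℝ wfun μ (Pi.single (1 : Fin 3) 1) =
    (Real.exp (μ 1) + Real.exp ((μ 0 + μ 1) / 2) * 2⁻¹) * (Sf μ)⁻¹ := by
  rw [(hasFDerivAt_w μ).fderiv]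
  simp [Dmap, Mm, Pi.single_apply]
  ring

def NDer (μ : Fin 3 → ℝ) : (Fin 3 → ℝ) →L[ℝ] ℝ :=
  Real.exp (μ 0) • P 0 + (2:ℝ)⁻¹ • (Real.exp ((μ 0 + μ 1) / 2) • Mm)

lemma hasFDerivAt_N (μ : Fin 3 → ℝ) : HasFDerivAt Nf (NDer μ) μ :=
  (hasFDerivAt_apply (𝕜 := ℝ) (0 : Fin 3) μ).exp.add
    ((hasFDerivAt_m μ).exp.mul_const (2:ℝ)⁻¹)

lemma hasFDerivAt_g0 (μ : Fin 3 → ℝ) :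
    HasFDerivAt g0 (Nf μ • ((-((Sf μ) ^ 2)⁻¹) • Dmap μ) + (Sf μ)⁻¹ • NDer μ) μ := by
  have hinv : HasFDerivAt (fun ν => (Sf ν)⁻¹) ((-((Sf μ) ^ 2)⁻¹) • Dmap μ) μ :=
    (hasDerivAt_inv (Sf_pos μ).ne').comp_hasFDerivAt μ (hasFDerivAt_S μ)
  exact (hasFDerivAt_N μ).mul hinv

lemma alg (a b c d : ℝ) (key : d * d = a * b) (hS : a + b + c + d ≠ 0) :
    (a + d * 2⁻¹) * (-((a+b+c+d) ^ 2)⁻¹ * (b + d * 2⁻¹)) + (a+b+c+d)⁻¹ * (2⁻¹ * (d * 2⁻¹)) =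
      d * (-a - b + c - 4 * d) / (4 * (a+b+c+d) ^ 2) := by
  field_simp
  linear_combination 16 * key

lemma second_deriv (μ : Fin 3 → ℝ) :
    fderiv ℝ g0 μ (Pi.single (1 : Fin 3) 1) =
      Real.exp ((μ 0 + μ 1) / 2) *
          (-Real.exp (μ 0) - Real.exp (μ 1) + Real.exp (μ 2) -
            4 * Real.exp ((μ 0 + μ 1) / 2)) /
        (4 * (Real.exp (μ 0) + Real.exp (μ 1) + Real.exp (μ 2) +
          Real.exp ((μ 0 + μ 1) / 2)) ^ 2) := by
  rw [(hasFDerivAt_g0 μ).fderiv]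
  have key : Real.exp ((μ 0 + μ 1) / 2) * Real.exp ((μ 0 + μ 1) / 2) =
      Real.exp (μ 0) * Real.exp (μ 1) := by
    rw [← Real.exp_add, ← Real.exp_add]; ring_nf
  have halg := alg (Real.exp (μ 0)) (Real.exp (μ 1)) (Real.exp (μ 2))
    (Real.exp ((μ 0 + μ 1) / 2)) key (by positivity)
  simp only [Dmap, Mm, NDer, Nf, Sf, ContinuousLinearMap.add_apply,
    ContinuousLinearMap.smul_apply, ContinuousLinearMap.proj_apply,
    smul_eq_mul, Pi.single_apply]
  set a := Real.exp (μ 0); set b := Real.exp (μ 1); set c := Real.exp (μ 2); set d := Real.exp ((μ 0 + μ 1) / 2)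
  norm_num [show ((2:Fin 3) = 1) = False from by decide, show ((1:Fin 3) = 2) = False from by decide]
  linarith [halg]

lemma deriv2_eq (μ : Fin 3 → ℝ) :
    fderiv ℝ (fun ν => fderiv ℝ wfun ν (Pi.single (0 : Fin 3) 1)) μ
        (Pi.single (1 : Fin 3) 1) =
      Real.exp ((μ 0 + μ 1) / 2) *
          (-Real.exp (μ 0) - Real.exp (μ 1) + Real.exp (μ 2) -
            4 * Real.exp ((μ 0 + μ 1) / 2)) /
        (4 * (Real.exp (μ 0) + Real.exp (μ 1) + Real.exp (μ 2) +
          Real.exp ((μ 0 + μ 1) / 2)) ^ 2) := by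
  have hfg : (fun ν => fderiv ℝ wfun ν (Pi.single (0 : Fin 3) 1)) = g0 := funext grad0
  rw [hfg]
  exact second_deriv μ

lemma term_bound {a b A B : ℝ} (ha : 0 ≤ a) (hb : 0 ≤ b) (hab : a + b = 1)
    (hA : 0 < A) (hB : 0 < B) (s t : ℝ) :
    Real.exp (a * s + b * t) ≤ A ^ a * B ^ b * (a * (Real.exp s / A) + b * (Real.exp t / B)) := by
  have h := Real.geom_mean_le_arith_mean2_weighted ha hb
    (div_nonneg (Real.exp_pos s).le hA.le) (div_nonneg (Real.exp_pos t).le hB.le) hab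
  have hpos : 0 < A ^ a * B ^ b := by positivity
  calc Real.exp (a * s + b * t)
      = A ^ a * B ^ b * ((Real.exp s / A) ^ a * (Real.exp t / B) ^ b) := by
        rw [Real.div_rpow (Real.exp_pos s).le hA.le, Real.div_rpow (Real.exp_pos t).le hB.le,
          ← Real.exp_mul, ← Real.exp_mul]
        rw [Real.exp_add]
        field_simp [(Real.rpow_pos_of_pos hA a).ne', (Real.rpow_pos_of_pos hB b).ne']
    _ ≤ A ^ a * B ^ b * (a * (Real.exp s / A) + b * (Real.exp t / B)) := by
        exact mul_le_mul_of_nonneg_left h hpos.le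

lemma convex_wfun : ConvexOn ℝ Set.univ wfun := by
  refine ⟨convex_univ, fun x _ y _ a b ha hb hab => ?_⟩
  rcases eq_or_lt_of_le ha with ha0 | ha
  · have hb1 : b = 1 := by linarith
    simp [← ha0, hb1]
  rcases eq_or_lt_of_le hb with hb0 | hb
  · have ha1 : a = 1 := by linarith
    simp [← hb0, ha1]
  have hA := Sf_pos x
  have hB := Sf_pos y
  have hc : ∀ i, (a • x + b • y) i = a * x i + b * y i := fun i => by
    simp [Pi.add_apply, Pi.smul_apply, smul_eq_mul]
  have key : Sf (a • x + b • y) ≤ Sf x ^ a * Sf y ^ b := by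
    have h0 := term_bound ha.le hb.le hab hA hB (x 0) (y 0)
    have h1 := term_bound ha.le hb.le hab hA hB (x 1) (y 1)
    have h2 := term_bound ha.le hb.le hab hA hB (x 2) (y 2)
    have hm := term_bound ha.le hb.le hab hA hB ((x 0 + x 1) / 2) ((y 0 + y 1) / 2)
    have hsum : Sf x ^ a * Sf y ^ b * (a * (Real.exp (x 0) / Sf x) + b * (Real.exp (y 0) / Sf y))
        + Sf x ^ a * Sf y ^ b * (a * (Real.exp (x 1) / Sf x) + b * (Real.exp (y 1) / Sf y))
        + Sf x ^ a * Sf y ^ b * (a * (Real.exp (x 2) / Sf x) + b * (Real.exp (y 2) / Sf y))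
        + Sf x ^ a * Sf y ^ b *
            (a * (Real.exp ((x 0 + x 1) / 2) / Sf x) + b * (Real.exp ((y 0 + y 1) / 2) / Sf y))
        = Sf x ^ a * Sf y ^ b := by
      have e1 : Real.exp (x 0) + Real.exp (x 1) + Real.exp (x 2) +
          Real.exp ((x 0 + x 1) / 2) = Sf x := rfl
      have e2 : Real.exp (y 0) + Real.exp (y 1) + Real.exp (y 2) +
          Real.exp ((y 0 + y 1) / 2) = Sf y := rfl
      field_simp
      linear_combination (Sf y * a) * e1
        + (Sf x * b) * e2
        + (Sf x * Sf y) * hab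
    have hS4 : (a * x 0 + b * y 0 + (a * x 1 + b * y 1)) / 2 =
        a * ((x 0 + x 1) / 2) + b * ((y 0 + y 1) / 2) := by ring
    unfold Sf
    rw [hc 0, hc 1, hc 2, hS4]
    exact (add_le_add (add_le_add (add_le_add h0 h1) h2) hm).trans (le_of_eq hsum)
  rw [wfun_eq, wfun_eq, wfun_eq, smul_eq_mul, smul_eq_mul]
  calc Real.log (Sf (a • x + b • y)) ≤ Real.log (Sf x ^ a * Sf y ^ b) :=
        Real.log_le_log (Sf_pos _) key
    _ = a * Real.log (Sf x) + b * Real.log (Sf y) := by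
        rw [Real.log_mul (Real.rpow_pos_of_pos hA a).ne' (Real.rpow_pos_of_pos hB b).ne',
          Real.log_rpow hA, Real.log_rpow hB]

lemma mono_wfun (μ₁ μ₂ : Fin 3 → ℝ) (h : μ₂ ≤ μ₁) : wfun μ₂ ≤ wfun μ₁ := by
  rw [wfun_eq, wfun_eq]
  apply Real.log_le_log (Sf_pos μ₂)
  unfold Sf
  gcongr <;> linarith [h 0, h 1, h 2]

lemma trans_wfun (μ : Fin 3 → ℝ) (t : ℝ) : wfun (μ + fun _ => t) = wfun μ + t := by
  unfold wfun
  simp only [Pi.add_apply]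
  have h4 : (μ 0 + t + (μ 1 + t)) / 2 = (μ 0 + μ 1) / 2 + t := by ring
  rw [h4, Real.exp_add, Real.exp_add, Real.exp_add, Real.exp_add,
    show Real.exp (μ 0) * Real.exp t + Real.exp (μ 1) * Real.exp t +
        Real.exp (μ 2) * Real.exp t + Real.exp ((μ 0 + μ 1) / 2) * Real.exp t =
      (Real.exp (μ 0) + Real.exp (μ 1) + Real.exp (μ 2) + Real.exp ((μ 0 + μ 1) / 2)) *
        Real.exp t from by ring,
    Real.log_mul (by positivity) (Real.exp_ne_zero t), Real.log_exp]

lemma exp2_eq : Real.exp 2 = Real.exp 1 ^ 2 := by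
  rw [show (2:ℝ) = 1 + 1 by norm_num, Real.exp_add]; ring

lemma exp4_eq : Real.exp 4 = Real.exp 1 ^ 4 := by
  rw [show (4:ℝ) = 1 + 1 + (1 + 1) by norm_num, Real.exp_add, Real.exp_add]; ring

lemma not_submodular :
    ¬ (∀ x y : Fin 3 → ℝ, wfun (x ⊔ y) + wfun (x ⊓ y) ≤ wfun x + wfun y) := by
  intro H
  have h := H ![2,0,4] ![0,2,4]
  have hsup : ((![2,0,4] : Fin 3 → ℝ) ⊔ ![0,2,4]) = ![2,2,4] := by
    funext i; fin_cases i <;> simp [Pi.sup_apply]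
  have hinf : ((![2,0,4] : Fin 3 → ℝ) ⊓ ![0,2,4]) = ![0,0,4] := by
    funext i; fin_cases i <;> simp [Pi.inf_apply]
  rw [hsup, hinf] at h
  unfold wfun at h
  norm_num [Matrix.cons_val_two] at h
  rw [exp2_eq, exp4_eq] at h
  have hcl : (2.718:ℝ) < Real.exp 1 := by linarith [Real.exp_one_gt_d9]
  have hcu : Real.exp 1 < 2.719 := by linarith [Real.exp_one_lt_d9]
  have c2l : (7.38:ℝ) < Real.exp 1 ^ 2 := by nlinarith
  have c2u : Real.exp 1 ^ 2 < 7.4 := by nlinarith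
  have c3u : Real.exp 1 ^ 3 < 20.12 := by nlinarith
  have c4l : (54.4:ℝ) < Real.exp 1 ^ 4 := by nlinarith
  have c4u : Real.exp 1 ^ 4 < 54.8 := by nlinarith
  have hsq : (2.95:ℝ) < (Real.exp 1 - 1) ^ 2 := by nlinarith
  have hbig : (160:ℝ) < Real.exp 1 ^ 4 * (Real.exp 1 - 1) ^ 2 := by nlinarith
  have key : Real.log (Real.exp 1 ^ 2 + 1 + Real.exp 1 ^ 4 + Real.exp 1) +
      Real.log (1 + Real.exp 1 ^ 2 + Real.exp 1 ^ 4 + Real.exp 1) <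
      Real.log (Real.exp 1 ^ 2 + Real.exp 1 ^ 2 + Real.exp 1 ^ 4 + Real.exp 1 ^ 2) +
      Real.log (2 + Real.exp 1 ^ 4 + 1) := by
    rw [← Real.log_mul (by positivity) (by positivity),
      ← Real.log_mul (by positivity) (by positivity)]
    apply Real.log_lt_log (by positivity)
    nlinarith [hbig, c4u, c3u, c2l, c2u, hcl, hcu]
  linarith

lemma not_substitutable :
    ¬ (∀ i j : Fin 3, i ≠ j → ∀ (μ : Fin 3 → ℝ) (t : ℝ), 0 < t →
        grad wfun (μ + t • (Pi.single i 1 : Fin 3 → ℝ)) j ≤ grad wfun μ j) := by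
  intro H
  have h := H 0 1 (by decide) ![0,0,4] 2 (by norm_num)
  have hpt : ((![0,0,4] : Fin 3 → ℝ) + (2:ℝ) • (Pi.single 0 1 : Fin 3 → ℝ)) = ![2,0,4] := by
    funext i; fin_cases i <;> simp [Pi.single_apply]
  rw [hpt] at h
  simp only [grad] at h
  rw [grad1, grad1] at h
  unfold Sf at h
  norm_num [Matrix.cons_val_two] at h
  rw [exp2_eq, exp4_eq] at h
  have hcl : (2.718:ℝ) < Real.exp 1 := by linarith [Real.exp_one_gt_d9]
  have hcu : Real.exp 1 < 2.719 := by linarith [Real.exp_one_lt_d9]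
  have c2u : Real.exp 1 ^ 2 < 7.4 := by nlinarith
  have c4l : (54.4:ℝ) < Real.exp 1 ^ 4 := by nlinarith
  have c4u : Real.exp 1 ^ 4 < 54.8 := by nlinarith
  have hbig : (92:ℝ) < Real.exp 1 ^ 4 * (Real.exp 1 - 1) := by nlinarith
  have key : (3:ℝ) / 2 * (2 + Real.exp 1 ^ 4 + 1)⁻¹ <
      (1 + Real.exp 1 * (1 / 2)) * (Real.exp 1 ^ 2 + 1 + Real.exp 1 ^ 4 + Real.exp 1)⁻¹ := by
    rw [← div_eq_mul_inv, ← div_eq_mul_inv,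
      div_lt_div_iff₀ (by positivity) (by positivity)]
    nlinarith [hbig, c2u, c4l, c4u, hcl, hcu]
  linarith

end Stmt19Aux

theorem stmt_19 (w : (Fin 3 → ℝ) → ℝ)
    (hw : w = fun μ => Real.log (Real.exp (μ 0) + Real.exp (μ 1) + Real.exp (μ 2) +
      Real.exp ((μ 0 + μ 1) / 2))) :
    IsCWF w ∧ Differentiable ℝ w ∧
    (∀ μ : Fin 3 → ℝ,
      fderiv ℝ (fun ν => fderiv ℝ w ν (Pi.single (0 : Fin 3) 1)) μ
          (Pi.single (1 : Fin 3) 1) =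
        Real.exp ((μ 0 + μ 1) / 2) *
            (-Real.exp (μ 0) - Real.exp (μ 1) + Real.exp (μ 2) -
              4 * Real.exp ((μ 0 + μ 1) / 2)) /
          (4 * (Real.exp (μ 0) + Real.exp (μ 1) + Real.exp (μ 2) +
            Real.exp ((μ 0 + μ 1) / 2)) ^ 2)) ∧
    (∀ μ : Fin 3 → ℝ,
      (0 ≤ fderiv ℝ (fun ν => fderiv ℝ w ν (Pi.single (0 : Fin 3) 1)) μ
          (Pi.single (1 : Fin 3) 1)) ↔
        4 * Real.exp ((μ 0 + μ 1) / 2) + Real.exp (μ 0) + Real.exp (μ 1) ≤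
          Real.exp (μ 2)) ∧
    ¬ (∀ x y : Fin 3 → ℝ, w (x ⊔ y) + w (x ⊓ y) ≤ w x + w y) ∧
    ¬ (∀ i j : Fin 3, i ≠ j → ∀ (μ : Fin 3 → ℝ) (t : ℝ), 0 < t →
        grad w (μ + t • (Pi.single i 1 : Fin 3 → ℝ)) j ≤ grad w μ j) := by
  have hw' : w = Stmt19Aux.wfun := hw
  subst hw'
  refine ⟨⟨Stmt19Aux.mono_wfun, Stmt19Aux.trans_wfun, Stmt19Aux.convex_wfun⟩,
    fun μ => (Stmt19Aux.hasFDerivAt_w μ).differentiableAt,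
    Stmt19Aux.deriv2_eq, ?_, Stmt19Aux.not_submodular, Stmt19Aux.not_substitutable⟩
  intro μ
  rw [Stmt19Aux.deriv2_eq μ]
  have hd : 0 < Real.exp ((μ 0 + μ 1) / 2) := Real.exp_pos _
  have hS : (0:ℝ) < 4 * (Real.exp (μ 0) + Real.exp (μ 1) + Real.exp (μ 2) +
      Real.exp ((μ 0 + μ 1) / 2)) ^ 2 := by positivity
  rw [le_div_iff₀ hS, zero_mul]
  constructor
  · intro h
    have hX := (mul_le_mul_iff_right₀ hd).mp (by linarith : Real.exp ((μ 0 + μ 1) / 2) * 0 ≤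
      Real.exp ((μ 0 + μ 1) / 2) * (-Real.exp (μ 0) - Real.exp (μ 1) + Real.exp (μ 2) -
        4 * Real.exp ((μ 0 + μ 1) / 2)))
    linarith
  · intro h
    have : (0:ℝ) ≤ -Real.exp (μ 0) - Real.exp (μ 1) + Real.exp (μ 2) -
        4 * Real.exp ((μ 0 + μ 1) / 2) := by linarith
    nlinarith [hd.le]
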